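/- Let (Ω, μ) be a probability space, let U be a character on L^∞(Ω, μ; ℂ), and let f ∈ L^∞(Ω, μ; ℂ). Then for every ε > 0 there exists a measurable set A ⊆ Ω such that U(1_A) = 1 and ‖1_A · f − U(f) · 1_A‖_{L^∞} ≤ ε, where 1_A denotes the equivalence class of the indicator function of A in L^∞(Ω, μ; ℂ). -/

import Mathlib

open MeasureTheory
open scoped ENNReal

/-- Let `(Ω, μ)` be a probability space, let `U` be a character on
`L^∞(Ω, μ; ℂ)` (i.e. a continuous, unital, multiplicative linear functional), and let
`f ∈ L^∞(Ω, μ; ℂ)`.  Then for every `ε > 0` there exists a measurable set `A ⊆ Ω` such that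
`U(1_A) = 1` and `‖1_A · f − U(f) · 1_A‖_{L^∞} ≤ ε`.  Multiplication in `L^∞` is expressed
through the multiplication of the underlying a.e.-equivalence classes of functions. -/
theorem character_indicator_localization
    {Ω : Type*} [MeasurableSpace Ω] (μ : Measure Ω) [IsProbabilityMeasure μ]
    (U : Lp ℂ ∞ μ →L[ℂ] ℂ)
    (hU1 : U (Lp.const ∞ μ (1 : ℂ)) = 1)
    (hUmul : ∀ f g h : Lp ℂ ∞ μ,
      (h : Ω →ₘ[μ] ℂ) = (f : Ω →ₘ[μ] ℂ) * (g : Ω →ₘ[μ] ℂ) → U h = U f * U g)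
    (f : Lp ℂ ∞ μ) (ε : ℝ) (hε : 0 < ε) :
    ∃ (A : Set Ω) (hA : MeasurableSet A),
      U (indicatorConstLp ∞ hA (measure_ne_top μ A) (1 : ℂ)) = 1 ∧
      ∃ pf : Lp ℂ ∞ μ,
        (pf : Ω →ₘ[μ] ℂ) =
          (indicatorConstLp ∞ hA (measure_ne_top μ A) (1 : ℂ) : Ω →ₘ[μ] ℂ) * (f : Ω →ₘ[μ] ℂ) ∧
        ‖pf - U f • indicatorConstLp ∞ hA (measure_ne_top μ A) (1 : ℂ)‖ ≤ ε := by
  classical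
  set c : ℂ := U f with hc
  have hf := Lp.aestronglyMeasurable f
  set g : Ω → ℂ := hf.mk _ with hgdef
  have hg : StronglyMeasurable g := hf.stronglyMeasurable_mk
  have hfg : (f : Ω → ℂ) =ᵐ[μ] g := hf.ae_eq_mk
  set A : Set Ω := {ω | ‖g ω - c‖ ≤ ε} with hAdef
  have hA : MeasurableSet A := by
    have hm : Measurable fun ω => ‖g ω - c‖ :=
      ((hg.sub stronglyMeasurable_const).norm).measurable
    exact hm measurableSet_Iic
  set χ : Lp ℂ ∞ μ := indicatorConstLp ∞ hA (measure_ne_top μ A) (1 : ℂ) with hχdef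
  have hχ : (χ : Ω → ℂ) =ᵐ[μ] A.indicator fun _ => (1 : ℂ) := indicatorConstLp_coeFn
  -- χ is idempotent
  have hidem : (χ : Ω →ₘ[μ] ℂ) = (χ : Ω →ₘ[μ] ℂ) * (χ : Ω →ₘ[μ] ℂ) := by
    apply AEEqFun.ext
    filter_upwards [AEEqFun.coeFn_mul (χ : Ω →ₘ[μ] ℂ) (χ : Ω →ₘ[μ] ℂ), hχ] with ω h1 h2
    rw [h1, Pi.mul_apply]
    show (χ : Ω → ℂ) ω = (χ : Ω → ℂ) ω * (χ : Ω → ℂ) ω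
    rw [h2]
    by_cases hω : ω ∈ A <;> simp [hω]
  have hUidem : U χ = U χ * U χ := hUmul χ χ χ hidem
  set one : Lp ℂ ∞ μ := Lp.const ∞ μ (1 : ℂ) with honedef
  -- U χ = 1
  have hUχ : U χ = 1 := by
    have h01 : U χ * (1 - U χ) = 0 := by linear_combination hUidem
    rcases mul_eq_zero.mp h01 with h0 | h0
    · exfalso
      -- construct the inverse of f - c off A
      set h : Ω → ℂ := Aᶜ.indicator (fun ω => (g ω - c)⁻¹) with hhdef
      have hhsm : AEStronglyMeasurable h μ := by
        apply StronglyMeasurable.aestronglyMeasurable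
        have : Measurable fun ω => (g ω - c)⁻¹ :=
          ((hg.measurable.sub measurable_const)).inv
        exact (this.indicator hA.compl).stronglyMeasurable
      have hhmem : MemLp h ∞ μ := by
        apply memLp_top_of_bound hhsm ε⁻¹
        filter_upwards with ω
        by_cases hω : ω ∈ A
        · simp [hhdef, hω, inv_nonneg.mpr hε.le]
        · have hgt : ε < ‖g ω - c‖ := lt_of_not_ge hω
          simp only [hhdef, Set.indicator_of_mem (Set.mem_compl hω), norm_inv]
          exact inv_anti₀ hε hgt.le
      set H : Lp ℂ ∞ μ := hhmem.toLp h with hHdef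
      have key : ((one - χ : Lp ℂ ∞ μ) : Ω →ₘ[μ] ℂ)
          = (H : Ω →ₘ[μ] ℂ) * ((f - c • one : Lp ℂ ∞ μ) : Ω →ₘ[μ] ℂ) := by
        apply AEEqFun.ext
        filter_upwards [Lp.coeFn_sub one χ, hχ,
          AEEqFun.coeFn_mul (H : Ω →ₘ[μ] ℂ) ((f - c • one : Lp ℂ ∞ μ) : Ω →ₘ[μ] ℂ),
          hhmem.coeFn_toLp, Lp.coeFn_sub f (c • one), Lp.coeFn_smul c one,
          Lp.coeFn_const ∞ μ (1 : ℂ), hfg] with ω e1 e2 e3 e4 e5 e6 e7 e8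
        show ((one - χ : Lp ℂ ∞ μ) : Ω → ℂ) ω
            = ((H : Ω →ₘ[μ] ℂ) * ((f - c • one : Lp ℂ ∞ μ) : Ω →ₘ[μ] ℂ)) ω
        rw [e1, Pi.sub_apply, e3, Pi.mul_apply]
        show (one : Ω → ℂ) ω - (χ : Ω → ℂ) ω
            = (H : Ω → ℂ) ω * ((f - c • one : Lp ℂ ∞ μ) : Ω → ℂ) ω
        rw [e2, e4, e5, Pi.sub_apply, e6, Pi.smul_apply, e7]
        by_cases hω : ω ∈ A
        · simp [hhdef, Set.indicator_of_notMem (by simpa using hω : ω ∉ Aᶜ), hω,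
            Function.const]
        · have hgt : ε < ‖g ω - c‖ := lt_of_not_ge hω
          have hne : g ω - c ≠ 0 := by
            intro h0'
            rw [h0'] at hgt
            simp at hgt
            linarith
          simp only [hhdef, Set.indicator_of_mem (Set.mem_compl hω),
            Set.indicator_of_notMem hω, Function.const, smul_eq_mul, e8]
          field_simp
          norm_num
      have := hUmul H (f - c • one) (one - χ) key
      rw [map_sub, map_sub, U.map_smul, hU1, ← hc, smul_eq_mul, mul_one, sub_self,
        mul_zero, h0, sub_zero] at this
      exact one_ne_zero this
    · exact (sub_eq_zero.mp h0).symm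
  refine ⟨A, hA, hUχ, ?_⟩
  -- the product element
  set q : Ω →ₘ[μ] ℂ := (χ : Ω →ₘ[μ] ℂ) * (f : Ω →ₘ[μ] ℂ) with hqdef
  have hqmem : q ∈ Lp ℂ ∞ μ := by
    rw [Lp.mem_Lp_iff_memLp]
    have h1 : MemLp ((χ : Ω → ℂ) • (f : Ω → ℂ)) ∞ μ :=
      MemLp.smul (Lp.memLp f) (Lp.memLp χ)
    refine (memLp_congr_ae ?_).mpr h1
    filter_upwards [AEEqFun.coeFn_mul (χ : Ω →ₘ[μ] ℂ) (f : Ω →ₘ[μ] ℂ)] with ω e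
    rw [e]
    simp [smul_eq_mul]
  refine ⟨⟨q, hqmem⟩, rfl, ?_⟩
  have hbnd : ∀ᵐ ω ∂μ, ‖((⟨q, hqmem⟩ : Lp ℂ ∞ μ) - c • χ : Lp ℂ ∞ μ) ω‖ ≤ ε := by
    filter_upwards [Lp.coeFn_sub (⟨q, hqmem⟩ : Lp ℂ ∞ μ) (c • χ), Lp.coeFn_smul c χ, hχ,
    AEEqFun.coeFn_mul (χ : Ω →ₘ[μ] ℂ) (f : Ω →ₘ[μ] ℂ), hfg] with ω e1 e2 e3 e4 e5
    rw [e1, Pi.sub_apply]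
    show ‖q ω - (c • χ : Lp ℂ ∞ μ) ω‖ ≤ ε
    rw [e4, Pi.mul_apply, e2, Pi.smul_apply]
    show ‖(χ : Ω → ℂ) ω * (f : Ω → ℂ) ω - c • (χ : Ω → ℂ) ω‖ ≤ ε
    rw [e3, e5, smul_eq_mul]
    by_cases hω : ω ∈ A
    · rw [Set.indicator_of_mem hω, one_mul, mul_one]
      exact hω
    · simp [hω, hε.le]
  have := Lp.norm_le_of_ae_bound hε.le hbnd
  simpa using this
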